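/- Let L be a countable first-order language and M a countably infinite L-structure such that for every natural number n, the action of the automorphism group of M on the set of n-tuples (Fin n → M), acting coordinatewise, has only finitely many orbits. Then the complete theory of M is ℵ₀-categorical, i.e., any two countable models of the complete theory of M are isomorphic. -/

import Mathlib

open FirstOrder Cardinal FirstOrder.Language FirstOrder.Language.Structure

namespace RNaux

variable {L : FirstOrder.Language} {M : Type*} [L.Structure M]

/-- The complete type of a tuple, as a set of formulas. -/
def tp (L : FirstOrder.Language) (N : Type*) [L.Structure N] {n : ℕ} (b : Fin n → N) :
    Set (L.Formula (Fin n)) := {φ | φ.Realize b}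

lemma mem_tp {N : Type*} [L.Structure N] {n : ℕ} {b : Fin n → N} {φ : L.Formula (Fin n)} :
    φ ∈ tp L N b ↔ φ.Realize b := Iff.rfl

lemma transfer {N : Type*} [L.Structure N] [N ⊨ L.completeTheory M] {n : ℕ}
    (φ : L.Formula (Fin n)) (h : ∀ a : Fin n → M, φ.Realize a) (b : Fin n → N) :
    φ.Realize b := by
  have key := Language.realize_iff_of_model_completeTheory M N
    ((φ.relabel (Sum.inr : Fin n → Empty ⊕ Fin n)).iAlls (Fin n))
  have hM : M ⊨ ((φ.relabel (Sum.inr : Fin n → Empty ⊕ Fin n)).iAlls (Fin n)) := by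
    rw [Sentence.Realize, Formula.realize_iAlls]
    intro i
    rw [Formula.realize_relabel]
    exact h _
  have hN := key.2 hM
  rw [Sentence.Realize, Formula.realize_iAlls] at hN
  have hNb := hN b
  rw [Formula.realize_relabel] at hNb
  exact hNb

lemma tp_relabel {N : Type*} [L.Structure N] {m n : ℕ} (b : Fin n → N) (r : Fin m → Fin n)
    {φ : L.Formula (Fin m)} : φ ∈ tp L N (b ∘ r) ↔ φ.relabel r ∈ tp L N b := by
  simp [mem_tp, Formula.realize_relabel]

/-- An isolating formula for the type of `a`, relative to a finite set `s` of candidate types. -/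
lemma isolator_aux {n : ℕ} (a : Fin n → M) (s : Set (Set (L.Formula (Fin n)))) (hs : s.Finite) :
    ∃ θ : L.Formula (Fin n), θ.Realize a ∧
      ∀ a' : Fin n → M, θ.Realize a' → tp L M a' ∈ s → tp L M a' = tp L M a := by
  refine Set.Finite.induction_on _ hs ⟨⊤, by simp [Formula.Realize], fun a' _ h => h.elim⟩ ?_
  rintro t s hts hsf ⟨θ, hθa, hθ⟩
  by_cases ht : t = tp L M a
  · refine ⟨θ, hθa, fun a' h1 h2 => ?_⟩
    rcases h2 with rfl | h2
    · exact ht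
    · exact hθ a' h1 h2
  · have : ∃ φ : L.Formula (Fin n), ¬(φ ∈ t ↔ φ ∈ tp L M a) := by
      by_contra hc
      push_neg at hc
      exact ht (Set.ext fun φ => hc φ)
    obtain ⟨φ, hφ⟩ := this
    by_cases hφa : φ ∈ tp L M a
    · refine ⟨θ ⊓ φ, ?_, ?_⟩
      · rw [Formula.realize_inf]; exact ⟨hθa, hφa⟩
      · intro a' h1 h2
        rw [Formula.realize_inf] at h1
        rcases h2 with rfl | h2
        · exact absurd (Iff.intro (fun _ => hφa) (fun _ => h1.2)) hφ
        · exact hθ a' h1.1 h2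
    · refine ⟨θ ⊓ φ.not, ?_, ?_⟩
      · rw [Formula.realize_inf, Formula.realize_not]; exact ⟨hθa, hφa⟩
      · intro a' h1 h2
        rw [Formula.realize_inf, Formula.realize_not] at h1
        rcases h2 with rfl | h2
        · exact absurd (Iff.intro (fun h => absurd h h1.2) (fun h => absurd h hφa)) hφ
        · exact hθ a' h1.1 h2

lemma tp_eq_of_isolator {N : Type*} [L.Structure N] [N ⊨ L.completeTheory M] {n : ℕ}
    {a : Fin n → M} {θ : L.Formula (Fin n)}
    (hiso : ∀ a' : Fin n → M, θ.Realize a' → tp L M a' = tp L M a)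
    {b : Fin n → N} (hb : θ.Realize b) : tp L N b = tp L M a := by
  have key : ∀ ψ : L.Formula (Fin n), ψ ∈ tp L M a → ψ.Realize b := by
    intro ψ hψ
    have himp : ∀ a' : Fin n → M, (θ.imp ψ).Realize a' := by
      intro a'
      rw [Formula.realize_imp]
      intro h1
      have h2 := hiso a' h1
      rw [← mem_tp, h2]
      exact hψ
    have := transfer (θ.imp ψ) himp b
    rw [Formula.realize_imp] at this
    exact this hb
  ext ψ
  constructor
  · intro hψb
    by_contra hψa
    have h3 : ψ.not ∈ tp L M a := by
      rw [mem_tp, Formula.realize_not]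
      exact hψa
    have := key ψ.not h3
    rw [Formula.realize_not] at this
    exact this hψb
  · exact key ψ

variable {L : FirstOrder.Language} {M : Type*} [L.Structure M]


/-- Automorphic tuples have the same type. -/
lemma tp_eq_of_orbit {n : ℕ} {a b : Fin n → M} (π : M ≃[L] M) (h : ⇑π ∘ a = b) :
    tp L M a = tp L M b := by
  subst h
  ext φ
  simp only [tp, Set.mem_setOf_eq]
  exact (StrongHomClass.realize_formula π φ).symm

lemma tp_eq_of_eqvGen {n : ℕ} {a b : Fin n → M}
    (h : Relation.EqvGen (fun a b : Fin n → M => ∃ π : M ≃[L] M, ⇑π ∘ a = b) a b) :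
    tp L M a = tp L M b := by
  induction h with
  | rel x y hxy => obtain ⟨π, hπ⟩ := hxy; exact tp_eq_of_orbit π hπ
  | refl => rfl
  | symm _ _ _ ih => exact ih.symm
  | trans _ _ _ _ _ ih1 ih2 => exact ih1.trans ih2


variable {L : FirstOrder.Language} {M : Type*} [L.Structure M]


/-- A finite disjunction, evaluated in two structures at once. -/
lemma exists_disj {n : ℕ} {ι : Type*} [DecidableEq ι] (s : Finset ι)
    (f : ι → L.Formula (Fin n)) (N₁ N₂ : Type*) [L.Structure N₁] [L.Structure N₂] :
    ∃ Φ : L.Formula (Fin n),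
      (∀ b : Fin n → N₁, Φ.Realize b ↔ ∃ q ∈ s, (f q).Realize b) ∧
      (∀ b : Fin n → N₂, Φ.Realize b ↔ ∃ q ∈ s, (f q).Realize b) := by
  induction s using Finset.induction_on with
  | empty =>
    refine ⟨⊥, fun b => ?_, fun b => ?_⟩ <;>
      simp [Formula.Realize, BoundedFormula.realize_bot]
  | @insert q s hq ih =>
    obtain ⟨Φ, h1, h2⟩ := ih
    refine ⟨f q ⊔ Φ, fun b => ?_, fun b => ?_⟩ <;>
      simp [Formula.realize_sup, h1, h2, Finset.mem_insert, or_and_right, exists_or]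

variable {L : FirstOrder.Language} {M : Type*} [L.Structure M]


/-- helper for existentially quantifying the last variable -/
def lastMap (n : ℕ) : Fin (n + 1) → Fin n ⊕ Unit :=
  fun i => Fin.lastCases (Sum.inr ()) (fun j => Sum.inl j) i

lemma elim_lastMap {α : Type*} (n : ℕ) (v : Fin n → α) (w : Unit → α) :
    (fun a => Sum.elim v w (lastMap n a)) = Fin.snoc v (w ()) := by
  funext a
  induction a using Fin.lastCases with
  | last => simp [lastMap]
  | cast j => simp [lastMap]

lemma realize_exLast {N : Type*} [L.Structure N] {n : ℕ} (θ : L.Formula (Fin (n + 1)))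
    (b : Fin n → N) :
    ((θ.relabel (lastMap n)).iExs Unit).Realize b ↔ ∃ y : N, θ.Realize (Fin.snoc b y) := by
  rw [Formula.realize_iExs]
  constructor
  · rintro ⟨w, hw⟩
    refine ⟨w (), ?_⟩
    rwa [Formula.realize_relabel, Function.comp_def, elim_lastMap] at hw
  · rintro ⟨y, hy⟩
    refine ⟨fun _ => y, ?_⟩
    rw [Formula.realize_relabel, Function.comp_def, elim_lastMap]
    exact hy

lemma finite_tp
    (horb : ∀ n : ℕ, Finite (Quot (fun a b : Fin n → M => ∃ π : M ≃[L] M, ⇑π ∘ a = b)))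
    (n : ℕ) : (Set.range (fun a : Fin n → M => tp L M a)).Finite := by
  haveI := horb n
  have hresp : ∀ a b : Fin n → M, (∃ π : M ≃[L] M, ⇑π ∘ a = b) → tp L M a = tp L M b := by
    rintro a b ⟨π, hπ⟩
    exact tp_eq_of_orbit π hπ
  have key : Set.range (fun a : Fin n → M => tp L M a) ⊆
      Set.range (Quot.lift (fun a : Fin n → M => tp L M a) hresp) := by
    rintro t ⟨a, rfl⟩
    exact ⟨Quot.mk _ a, rfl⟩
  exact (Set.finite_range _).subset key

lemma exists_type_match
    (horb : ∀ n : ℕ, Finite (Quot (fun a b : Fin n → M => ∃ π : M ≃[L] M, ⇑π ∘ a = b)))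
    {N : Type*} [L.Structure N] [N ⊨ L.completeTheory M] {n : ℕ} (b : Fin n → N) :
    ∃ a : Fin n → M, tp L N b = tp L M a := by
  classical
  set R := fun a b : Fin n → M => ∃ π : M ≃[L] M, ⇑π ∘ a = b with hR
  haveI : Finite (Quot R) := horb n
  haveI : Fintype (Quot R) := Fintype.ofFinite _
  have hrep : ∀ a : Fin n → M, tp L M a = tp L M (Quot.out (Quot.mk R a)) := by
    intro a
    apply tp_eq_of_eqvGen
    rw [← Quot.eq]
    exact (Quot.out_eq _).symm
  choose θ hθ1 hθ2 using fun q : Quot R =>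
    isolator_aux (Quot.out q) (Set.range (fun a : Fin n → M => tp L M a)) (finite_tp horb n)
  have hθiso : ∀ q (a' : Fin n → M), (θ q).Realize a' → tp L M a' = tp L M (Quot.out q) :=
    fun q a' h' => hθ2 q a' h' ⟨a', rfl⟩
  obtain ⟨Φ, h1, h2⟩ := exists_disj (Finset.univ : Finset (Quot R)) θ M N
  have hM : ∀ a : Fin n → M, Φ.Realize a := by
    intro a
    rw [h1]
    refine ⟨Quot.mk R a, Finset.mem_univ _, ?_⟩
    have : θ (Quot.mk R a) ∈ tp L M a := by
      rw [hrep a]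
      exact hθ1 _
    exact this
  have hΦb : Φ.Realize b := transfer Φ hM b
  rw [h2] at hΦb
  obtain ⟨q, -, hq⟩ := hΦb
  exact ⟨Quot.out q, tp_eq_of_isolator (hθiso q) hq⟩

lemma forth
    (horb : ∀ n : ℕ, Finite (Quot (fun a b : Fin n → M => ∃ π : M ≃[L] M, ⇑π ∘ a = b)))
    {N₁ N₂ : Type*} [L.Structure N₁] [L.Structure N₂]
    [N₁ ⊨ L.completeTheory M] [N₂ ⊨ L.completeTheory M] {n : ℕ}
    {b : Fin n → N₁} {c : Fin n → N₂} (h : tp L N₁ b = tp L N₂ c) (x : N₁) :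
    ∃ y : N₂, tp L N₁ (Fin.snoc b x) = tp L N₂ (Fin.snoc c y) := by
  obtain ⟨a, ha⟩ := exists_type_match horb (Fin.snoc b x)
  obtain ⟨θ, hθa, hθiso'⟩ :=
    isolator_aux a (Set.range (fun a : Fin (n+1) → M => tp L M a)) (finite_tp horb (n+1))
  have hθiso : ∀ a', θ.Realize a' → tp L M a' = tp L M a :=
    fun a' h' => hθiso' a' h' ⟨a', rfl⟩
  have hθb : θ.Realize (Fin.snoc b x) := by
    have : θ ∈ tp L N₁ (Fin.snoc b x) := by rw [ha]; exact hθa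
    exact this
  have hε : ((θ.relabel (lastMap n)).iExs Unit).Realize b := (realize_exLast θ b).2 ⟨x, hθb⟩
  have hεc : ((θ.relabel (lastMap n)).iExs Unit).Realize c := by
    have h' : (θ.relabel (lastMap n)).iExs Unit ∈ tp L N₁ b := hε
    rw [h] at h'
    exact h'
  obtain ⟨y, hy⟩ := (realize_exLast θ c).1 hεc
  exact ⟨y, by rw [ha, tp_eq_of_isolator hθiso hy]⟩

lemma back
    (horb : ∀ n : ℕ, Finite (Quot (fun a b : Fin n → M => ∃ π : M ≃[L] M, ⇑π ∘ a = b)))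
    {N₁ N₂ : Type*} [L.Structure N₁] [L.Structure N₂]
    [N₁ ⊨ L.completeTheory M] [N₂ ⊨ L.completeTheory M] {n : ℕ}
    {b : Fin n → N₁} {c : Fin n → N₂} (h : tp L N₁ b = tp L N₂ c) (y : N₂) :
    ∃ x : N₁, tp L N₁ (Fin.snoc b x) = tp L N₂ (Fin.snoc c y) := by
  obtain ⟨x, hx⟩ := forth horb h.symm y
  exact ⟨x, hx.symm⟩

lemma restr_update_update {α : Type*} (u : ℕ → α) (n : ℕ) (x y : α) :
    (fun i : Fin (n + 2) =>
        Function.update (Function.update u n x) (n + 1) y i.val) =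
      Fin.snoc (Fin.snoc (fun i : Fin n => u i.val) x) y := by
  funext i
  induction i using Fin.lastCases with
  | last =>
    have : (Fin.last (n + 1)).val = n + 1 := rfl
    simp [this, Function.update_self]
  | cast j =>
    rw [Fin.snoc_castSucc]
    have hj : (Fin.castSucc j).val = j.val := rfl
    have hne : (Fin.castSucc j).val ≠ n + 1 := by
      have := j.isLt
      omega
    rw [hj]
    induction j using Fin.lastCases with
    | last =>
      have h2 : (Fin.last n).val = n := rfl
      rw [h2, Function.update_of_ne (by omega), Function.update_self, Fin.snoc_last]
    | cast j' =>
      have h3 : (Fin.castSucc j').val = j'.val := rfl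
      have := j'.isLt
      rw [h3, Function.update_of_ne (by omega), Function.update_of_ne (by omega),
        Fin.snoc_castSucc]

lemma tp_zero
    (horb : ∀ n : ℕ, Finite (Quot (fun a b : Fin n → M => ∃ π : M ≃[L] M, ⇑π ∘ a = b)))
    {N₁ N₂ : Type*} [L.Structure N₁] [L.Structure N₂]
    [N₁ ⊨ L.completeTheory M] [N₂ ⊨ L.completeTheory M]
    (b : Fin 0 → N₁) (c : Fin 0 → N₂) : tp L N₁ b = tp L N₂ c := by
  obtain ⟨a₁, h₁⟩ := exists_type_match horb b
  obtain ⟨a₂, h₂⟩ := exists_type_match horb c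
  have : a₁ = a₂ := funext fun i => i.elim0
  rw [h₁, h₂, this]

section Construction

variable (horb : ∀ n : ℕ, Finite (Quot (fun a b : Fin n → M => ∃ π : M ≃[L] M, ⇑π ∘ a = b)))
variable {N₁ N₂ : Type*} [L.Structure N₁] [L.Structure N₂]
variable [N₁ ⊨ L.completeTheory M] [N₂ ⊨ L.completeTheory M]
variable (e₁ : ℕ → N₁) (e₂ : ℕ → N₂)

variable (L N₁ N₂) in
/-- A pair of infinite sequences whose length-`n` initial segments have the same type. -/
def GoodPair (n : ℕ) : Type _ :=
  {p : (ℕ → N₁) × (ℕ → N₂) //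
    tp L N₁ (fun i : Fin n => p.1 i.val) = tp L N₂ (fun i : Fin n => p.2 i.val)}

/-- The `N₂`-witness matching a new element of `N₁`. -/
noncomputable def yChoice (k : ℕ) (p : GoodPair L N₁ N₂ (2 * k)) : N₂ :=
  Classical.choose (forth horb p.2 (e₁ k))

lemma yChoice_spec (k : ℕ) (p : GoodPair L N₁ N₂ (2 * k)) :
    tp L N₁ (Fin.snoc (fun i : Fin (2 * k) => p.1.1 i.val) (e₁ k)) =
      tp L N₂ (Fin.snoc (fun i : Fin (2 * k) => p.1.2 i.val) (yChoice horb e₁ k p)) :=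
  Classical.choose_spec (forth horb p.2 (e₁ k))

/-- The `N₁`-witness matching a new element of `N₂`. -/
noncomputable def xChoice (k : ℕ) (p : GoodPair L N₁ N₂ (2 * k)) : N₁ :=
  Classical.choose (back horb (yChoice_spec horb e₁ k p) (e₂ k))

lemma xChoice_spec (k : ℕ) (p : GoodPair L N₁ N₂ (2 * k)) :
    tp L N₁ (Fin.snoc (Fin.snoc (fun i : Fin (2 * k) => p.1.1 i.val) (e₁ k))
        (xChoice horb e₁ e₂ k p)) =
      tp L N₂ (Fin.snoc (Fin.snoc (fun i : Fin (2 * k) => p.1.2 i.val)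
        (yChoice horb e₁ k p)) (e₂ k)) :=
  Classical.choose_spec (back horb (yChoice_spec horb e₁ k p) (e₂ k))

/-- One step of the back-and-forth construction. -/
noncomputable def stepPair (k : ℕ) (p : GoodPair L N₁ N₂ (2 * k)) :
    GoodPair L N₁ N₂ (2 * k + 2) :=
  ⟨(Function.update (Function.update p.1.1 (2 * k) (e₁ k)) (2 * k + 1)
      (xChoice horb e₁ e₂ k p),
    Function.update (Function.update p.1.2 (2 * k) (yChoice horb e₁ k p)) (2 * k + 1) (e₂ k)),
   by
    show tp L N₁ (fun i : Fin (2 * k + 2) =>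
        Function.update (Function.update p.1.1 (2 * k) (e₁ k)) (2 * k + 1)
          (xChoice horb e₁ e₂ k p) i.val) = _
    rw [restr_update_update, restr_update_update]
    exact xChoice_spec horb e₁ e₂ k p⟩

/-- The back-and-forth sequence. -/
noncomputable def seqPair : ∀ k : ℕ, GoodPair L N₁ N₂ (2 * k)
  | 0 => ⟨(fun _ => e₁ 0, fun _ => e₂ 0), tp_zero horb _ _⟩
  | k + 1 => stepPair horb e₁ e₂ k (seqPair k)

lemma seqPair_succ (k : ℕ) :
    seqPair horb e₁ e₂ (k + 1) = stepPair horb e₁ e₂ k (seqPair horb e₁ e₂ k) := rfl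

lemma seqPair_succ_apply_ne (k i : ℕ) (h1 : i ≠ 2 * k) (h2 : i ≠ 2 * k + 1) :
    (seqPair horb e₁ e₂ (k + 1)).1.1 i = (seqPair horb e₁ e₂ k).1.1 i ∧
      (seqPair horb e₁ e₂ (k + 1)).1.2 i = (seqPair horb e₁ e₂ k).1.2 i := by
  rw [seqPair_succ]
  constructor
  · show Function.update (Function.update _ (2 * k) _) (2 * k + 1) _ i = _
    rw [Function.update_of_ne h2, Function.update_of_ne h1]
  · show Function.update (Function.update _ (2 * k) _) (2 * k + 1) _ i = _
    rw [Function.update_of_ne h2, Function.update_of_ne h1]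

lemma seqPair_stable (k l : ℕ) (hkl : k ≤ l) (i : ℕ) (hi : i < 2 * k) :
    (seqPair horb e₁ e₂ l).1.1 i = (seqPair horb e₁ e₂ k).1.1 i ∧
      (seqPair horb e₁ e₂ l).1.2 i = (seqPair horb e₁ e₂ k).1.2 i := by
  induction l, hkl using Nat.le_induction with
  | base => exact ⟨rfl, rfl⟩
  | succ l hkl ih =>
    have h := seqPair_succ_apply_ne horb e₁ e₂ l i (by omega) (by omega)
    exact ⟨h.1.trans ih.1, h.2.trans ih.2⟩

lemma seqPair_fst_val (k : ℕ) : (seqPair horb e₁ e₂ (k + 1)).1.1 (2 * k) = e₁ k := by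
  rw [seqPair_succ]
  show Function.update (Function.update _ (2 * k) _) (2 * k + 1) _ (2 * k) = _
  rw [Function.update_of_ne (by omega), Function.update_self]

lemma seqPair_snd_val (k : ℕ) : (seqPair horb e₁ e₂ (k + 1)).1.2 (2 * k + 1) = e₂ k := by
  rw [seqPair_succ]
  show Function.update (Function.update _ (2 * k) _) (2 * k + 1) _ (2 * k + 1) = _
  rw [Function.update_self]

/-- The first sequence of the back-and-forth construction. -/
noncomputable def Bfun (i : ℕ) : N₁ := (seqPair horb e₁ e₂ (i + 1)).1.1 i

/-- The second sequence of the back-and-forth construction. -/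
noncomputable def Cfun (i : ℕ) : N₂ := (seqPair horb e₁ e₂ (i + 1)).1.2 i

lemma Bfun_eq (k i : ℕ) (hi : i < 2 * k) :
    Bfun horb e₁ e₂ i = (seqPair horb e₁ e₂ k).1.1 i ∧
      Cfun horb e₁ e₂ i = (seqPair horb e₁ e₂ k).1.2 i := by
  rcases le_total (i + 1) k with h | h
  · have := seqPair_stable horb e₁ e₂ (i + 1) k h i (by omega)
    exact ⟨this.1.symm, this.2.symm⟩
  · exact seqPair_stable horb e₁ e₂ k (i + 1) h i hi

lemma tp_restrict {N N' : Type*} [L.Structure N] [L.Structure N'] {m n : ℕ}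
    {b : Fin n → N} {c : Fin n → N'} (h : tp L N b = tp L N' c) (r : Fin m → Fin n) :
    tp L N (b ∘ r) = tp L N' (c ∘ r) := by
  ext φ
  rw [tp_relabel, tp_relabel, h]

lemma tp_BC (m : ℕ) :
    tp L N₁ (fun i : Fin m => Bfun horb e₁ e₂ i.val) =
      tp L N₂ (fun i : Fin m => Cfun horb e₁ e₂ i.val) := by
  have h1 : (fun i : Fin m => Bfun horb e₁ e₂ i.val) =
      (fun i : Fin m => (seqPair horb e₁ e₂ m).1.1 i.val) :=
    funext fun i => (Bfun_eq horb e₁ e₂ m i.val (by have := i.isLt; omega)).1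
  have h2 : (fun i : Fin m => Cfun horb e₁ e₂ i.val) =
      (fun i : Fin m => (seqPair horb e₁ e₂ m).1.2 i.val) :=
    funext fun i => (Bfun_eq horb e₁ e₂ m i.val (by have := i.isLt; omega)).2
  rw [h1, h2]
  exact tp_restrict (seqPair horb e₁ e₂ m).2
    (fun i : Fin m => (⟨i.val, by have := i.isLt; omega⟩ : Fin (2 * m)))

lemma Bfun_surj (he₁ : Function.Surjective e₁) : Function.Surjective (Bfun horb e₁ e₂) := by
  intro x
  obtain ⟨k, rfl⟩ := he₁ x
  refine ⟨2 * k, ?_⟩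
  rw [(Bfun_eq horb e₁ e₂ (k + 1) (2 * k) (by omega)).1]
  exact seqPair_fst_val horb e₁ e₂ k

lemma Cfun_surj (he₂ : Function.Surjective e₂) : Function.Surjective (Cfun horb e₁ e₂) := by
  intro y
  obtain ⟨k, rfl⟩ := he₂ y
  refine ⟨2 * k + 1, ?_⟩
  rw [(Bfun_eq horb e₁ e₂ (k + 1) (2 * k + 1) (by omega)).2]
  exact seqPair_snd_val horb e₁ e₂ k

end Construction

/-- From a pair of compatible surjective sequences, build an isomorphism. -/
lemma equiv_of_seq {N₁ N₂ : Type*} [L.Structure N₁] [L.Structure N₂]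
    (B : ℕ → N₁) (C : ℕ → N₂)
    (hT : ∀ m : ℕ, tp L N₁ (fun i : Fin m => B i.val) = tp L N₂ (fun i : Fin m => C i.val))
    (hB : Function.Surjective B) (hC : Function.Surjective C) :
    Nonempty (N₁ ≃[L] N₂) := by
  classical
  have realize_iff : ∀ (m : ℕ) (φ : L.Formula (Fin m)),
      φ.Realize (fun i : Fin m => B i.val) ↔ φ.Realize (fun i : Fin m => C i.val) :=
    fun m φ => Set.ext_iff.mp (hT m) φ
  have eqBC : ∀ i j : ℕ, B i = B j ↔ C i = C j := by
    intro i j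
    have h := realize_iff (max i j + 1)
      (Term.equal (Term.var (⟨i, by omega⟩ : Fin (max i j + 1)))
        (Term.var (⟨j, by omega⟩ : Fin (max i j + 1))))
    simpa [Formula.realize_equal, Term.realize_var] using h
  have funTrans : ∀ {l : ℕ} (f : L.Functions l) (idx : Fin l → ℕ) (i₀ : ℕ),
      funMap f (fun t => B (idx t)) = B i₀ → funMap f (fun t => C (idx t)) = C i₀ := by
    intro l f idx i₀ hfB
    set m := (Finset.univ.sup idx ⊔ i₀) + 1 with hm
    have hidx : ∀ t, idx t < m := by
      intro t
      have := Finset.le_sup (f := idx) (Finset.mem_univ t)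
      omega
    have hi₀ : i₀ < m := by omega
    have h := realize_iff m
      (Term.equal (Term.func f (fun t => Term.var (⟨idx t, hidx t⟩ : Fin m)))
        (Term.var (⟨i₀, hi₀⟩ : Fin m)))
    simp only [Formula.realize_equal, Term.realize_func, Term.realize_var] at h
    exact h.1 hfB
  have relTrans : ∀ {l : ℕ} (r : L.Relations l) (idx : Fin l → ℕ),
      (RelMap r (fun t => B (idx t)) ↔ RelMap r (fun t => C (idx t))) := by
    intro l r idx
    set m := Finset.univ.sup idx + 1 with hm
    have hidx : ∀ t, idx t < m := by
      intro t
      have := Finset.le_sup (f := idx) (Finset.mem_univ t)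
      omega
    have h := realize_iff m (r.formula (fun t => Term.var (⟨idx t, hidx t⟩ : Fin m)))
    simpa [Formula.realize_rel, Term.realize_var] using h
  choose ind hind using hB
  let G : N₁ → N₂ := fun x => C (ind x)
  have hGB : ∀ i, G (B i) = C i := fun i => (eqBC (ind (B i)) i).1 (hind (B i))
  have hGsurj : Function.Surjective G := by
    intro y
    obtain ⟨i, rfl⟩ := hC y
    exact ⟨B i, hGB i⟩
  have hGinj : Function.Injective G := by
    intro x x' h
    have := (eqBC (ind x) (ind x')).2 h
    rwa [hind, hind] at this
  refine ⟨⟨Equiv.ofBijective G ⟨hGinj, hGsurj⟩, ?_, ?_⟩⟩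
  · intro l f a
    show G (funMap f a) = funMap f (fun t => G (a t))
    have hfB : funMap f (fun t => B (ind (a t))) = B (ind (funMap f a)) := by
      have h1 : (fun t => B (ind (a t))) = a := funext fun t => hind (a t)
      rw [h1, hind]
    have := funTrans f (fun t => ind (a t)) (ind (funMap f a)) hfB
    exact this.symm
  · intro l r a
    show RelMap r (fun t => G (a t)) ↔ RelMap r a
    have h1 : (fun t => B (ind (a t))) = a := funext fun t => hind (a t)
    have := relTrans r (fun t => ind (a t))
    rw [h1] at this
    exact this.symm

/-- Any two countable nonempty models of the complete theory of `M` are isomorphic. -/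
lemma nonempty_equiv
    (horb : ∀ n : ℕ, Finite (Quot (fun a b : Fin n → M => ∃ π : M ≃[L] M, ⇑π ∘ a = b)))
    {N₁ N₂ : Type*} [L.Structure N₁] [L.Structure N₂]
    [N₁ ⊨ L.completeTheory M] [N₂ ⊨ L.completeTheory M]
    [Countable N₁] [Countable N₂] [Nonempty N₁] [Nonempty N₂] :
    Nonempty (N₁ ≃[L] N₂) := by
  obtain ⟨e₁, he₁⟩ := exists_surjective_nat N₁
  obtain ⟨e₂, he₂⟩ := exists_surjective_nat N₂
  exact equiv_of_seq (Bfun horb e₁ e₂) (Cfun horb e₁ e₂) (tp_BC horb e₁ e₂)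
    (Bfun_surj horb e₁ e₂ he₁) (Cfun_surj horb e₁ e₂ he₂)

end RNaux

/-- Ryll-Nardzewski–Engeler–Svenonius, converse direction: if for every `n` the automorphism
group of a countably infinite structure `M` over a countable language has finitely many orbits
on `n`-tuples, then the complete theory of `M` is ℵ₀-categorical. -/
theorem stmt_1 (L : FirstOrder.Language) [Countable L.Symbols]
    (M : Type*) [L.Structure M] [Countable M] [Infinite M]
    (horb : ∀ n : ℕ, Finite (Quot (fun a b : Fin n → M => ∃ π : M ≃[L] M, ⇑π ∘ a = b))) :
    Cardinal.Categorical ℵ₀ (L.completeTheory M) := by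
  intro M₁ M₂ h₁ h₂
  haveI : Countable M₁ := Cardinal.mk_le_aleph0_iff.mp h₁.le
  haveI : Countable M₂ := Cardinal.mk_le_aleph0_iff.mp h₂.le
  exact RNaux.nonempty_equiv horb
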